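/- The mad spectrum is closed under singular limits: if μ is a cardinal with cf(μ) < μ and μ = sup of a set of cardinalities of infinite mad families on ω each below μ (one for each i < cf(μ), with cf(μ) ≤ μ_i < μ and Σ_{i<cf(μ)} μ_i = μ), then there exists a mad family on ω of cardinality μ. -/

import Mathlib

/-- A family of subsets of ℕ is almost disjoint: all members are infinite
and distinct members have finite intersection. -/
def IsAlmostDisjoint (A : Set (Set ℕ)) : Prop :=
  (∀ a ∈ A, a.Infinite) ∧ A.Pairwise fun a b => (a ∩ b).Finite

/-- A family is maximal almost disjoint (mad). -/
def IsMad (A : Set (Set ℕ)) : Prop :=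
  IsAlmostDisjoint A ∧ ∀ b : Set ℕ, b.Infinite → ∃ a ∈ A, (b ∩ a).Infinite

/-- The mad spectrum is closed under singular limits: if `μ` is singular and is the
sum of cardinals `μ i < μ`, `cf μ ≤ μ i`, each the cardinality of an infinite mad
family, then there is a mad family of cardinality `μ`. -/
theorem mad_spectrum_closed_under_singular_limits
    (μ : Cardinal) (hsing : μ.ord.cof < μ)
    (ι : Type) (hι : Cardinal.mk ι = μ.ord.cof)
    (μi : ι → Cardinal)
    (hlow : ∀ i, μ.ord.cof ≤ μi i) (hlt : ∀ i, μi i < μ)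
    (hsum : Cardinal.sum μi = μ)
    (hmad : ∀ i, ∃ A : Set (Set ℕ), IsMad A ∧ A.Infinite ∧ Cardinal.mk A = μi i) :
    ∃ A : Set (Set ℕ), IsMad A ∧ A.Infinite ∧ Cardinal.mk A = μ := by
  classical
  -- ι is nonempty
  have hι0 : Nonempty ι := by
    by_contra h
    rw [not_nonempty_iff] at h
    have h0 : μ = 0 := by
      haveI : IsEmpty ι := h
      rw [← hsum, Cardinal.sum]
      exact Cardinal.mk_eq_zero _
    rw [h0] at hsing
    exact (Cardinal.zero_le _ : (0 : Cardinal) ≤ _).not_gt hsing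
  obtain ⟨i₀⟩ := hι0
  -- choose the mad families
  choose A hAmad hAinf hAcard using hmad
  set B₀ : Set (Set ℕ) := A i₀ with hB₀
  -- embed ι into B₀
  have hcard : Cardinal.mk ι ≤ Cardinal.mk B₀ := by
    rw [hι, hAcard i₀]; exact hlow i₀
  obtain ⟨f⟩ := (Cardinal.le_def _ _).mp hcard
  set F : ι → Set ℕ := fun i => (f i : Set ℕ) with hF
  have hFinj : Function.Injective F :=
    Subtype.val_injective.comp f.injective
  have hFmem : ∀ i, F i ∈ B₀ := fun i => (f i).2
  have hFinf : ∀ i, (F i).Infinite := fun i => (hAmad i₀).1.1 _ (hFmem i)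
  -- choose enumerations of the F i
  have hπex : ∀ i, ∃ π : ℕ → ℕ, Function.Injective π ∧ Set.range π = F i := by
    intro i
    haveI := (hFinf i).to_subtype
    obtain ⟨e⟩ := nonempty_equiv_of_countable (α := ℕ) (β := ↥(F i))
    refine ⟨fun n => (e n : ℕ), Subtype.val_injective.comp e.injective, ?_⟩
    have : Set.range (fun n => (e n : ℕ)) = Subtype.val '' Set.range e := by
      rw [← Set.range_comp]; rfl
    rw [this, e.range_eq_univ, Set.image_univ, Subtype.range_coe]
  choose π hπinj hπrange using hπex
  -- the transplanted families
  set G : ι → Set ℕ → Set ℕ := fun i a => π i '' a with hG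
  have hGsub : ∀ i a, G i a ⊆ F i := by
    intro i a
    rw [← hπrange i]; exact Set.image_subset_range _ _
  have hGinf : ∀ i a, a.Infinite → (G i a).Infinite := fun i a ha =>
    ha.image ((hπinj i).injOn)
  have hGinj : ∀ i, Function.Injective (G i) := fun i =>
    Set.image_injective.mpr (hπinj i)
  set T : ι → Set (Set ℕ) := fun i => G i '' A i with hT
  have hTinf : ∀ i x, x ∈ T i → x.Infinite := by
    rintro i x ⟨a, ha, rfl⟩
    exact hGinf i a ((hAmad i).1.1 a ha)
  have hTsub : ∀ i x, x ∈ T i → x ⊆ F i := by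
    rintro i x ⟨a, _, rfl⟩; exact hGsub i a
  -- distinct F's have finite intersection
  have hFad : ∀ i j, i ≠ j → (F i ∩ F j).Finite := fun i j hij =>
    (hAmad i₀).1.2 (hFmem i) (hFmem j) (fun h => hij (hFinj h))
  -- members of distinct T's have finite intersection
  have hTT : ∀ i j, i ≠ j → ∀ x ∈ T i, ∀ y ∈ T j, (x ∩ y).Finite := by
    intro i j hij x hx y hy
    exact (hFad i j hij).subset
      (Set.inter_subset_inter (hTsub i x hx) (hTsub j y hy))
  set S : Set (Set ℕ) := B₀ \ Set.range F with hS
  set 𝒜 : Set (Set ℕ) := S ∪ ⋃ i, T i with h𝒜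
  -- members of S meet members of any T finitely
  have hST : ∀ x ∈ S, ∀ i, ∀ y ∈ T i, (x ∩ y).Finite := by
    intro x hx i y hy
    have hxne : x ≠ F i := fun h => hx.2 ⟨i, h.symm⟩
    have : (x ∩ F i).Finite := (hAmad i₀).1.2 hx.1 (hFmem i) hxne
    exact this.subset (Set.inter_subset_inter_right x (hTsub i y hy))
  -- the family 𝒜 is almost disjoint
  have had : IsAlmostDisjoint 𝒜 := by
    constructor
    · rintro a (ha | ha)
      · exact (hAmad i₀).1.1 a ha.1
      · obtain ⟨i, hi⟩ := Set.mem_iUnion.mp ha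
        exact hTinf i a hi
    · rintro x (hx | hx) y (hy | hy) hne
      · exact (hAmad i₀).1.2 hx.1 hy.1 hne
      · obtain ⟨i, hi⟩ := Set.mem_iUnion.mp hy
        exact hST x hx i y hi
      · obtain ⟨i, hi⟩ := Set.mem_iUnion.mp hx
        rw [Set.inter_comm]
        exact hST y hy i x hi
      · obtain ⟨i, hi⟩ := Set.mem_iUnion.mp hx
        obtain ⟨j, hj⟩ := Set.mem_iUnion.mp hy
        rcases eq_or_ne i j with rfl | hij
        · obtain ⟨a, ha, rfl⟩ := hi
          obtain ⟨b, hb, rfl⟩ := hj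
          have hab : a ≠ b := fun h => hne (by rw [h])
          have : (a ∩ b).Finite := (hAmad i).1.2 ha hb hab
          rw [show G i a ∩ G i b = π i '' (a ∩ b) from
            (Set.image_inter (hπinj i)).symm]
          exact this.image _
        · exact hTT i j hij x hi y hj
  -- maximality
  have hmax : ∀ b : Set ℕ, b.Infinite → ∃ a ∈ 𝒜, (b ∩ a).Infinite := by
    intro X hX
    obtain ⟨b, hb, hXb⟩ := (hAmad i₀).2 X hX
    by_cases hbr : b ∈ Set.range F
    · obtain ⟨i, rfl⟩ := hbr
      -- pull back through π i
      have hY : (π i ⁻¹' X).Infinite := by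
        apply Set.Infinite.of_image (π i)
        rw [Set.image_preimage_eq_inter_range, hπrange i]
        exact hXb
      obtain ⟨a, ha, hYa⟩ := (hAmad i).2 _ hY
      refine ⟨G i a, Set.mem_union_right _ (Set.mem_iUnion.mpr ⟨i, a, ha, rfl⟩), ?_⟩
      have himg : (π i '' (π i ⁻¹' X ∩ a)).Infinite := hYa.image ((hπinj i).injOn)
      apply himg.mono
      rw [Set.image_inter (hπinj i), Set.image_preimage_eq_inter_range]
      exact Set.inter_subset_inter Set.inter_subset_left subset_rfl
    · exact ⟨b, Set.mem_union_left _ ⟨hb, hbr⟩, hXb⟩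
  -- cardinality facts
  have haleph : Cardinal.aleph0 ≤ μ := by
    refine le_trans ?_ (hlt i₀).le
    rw [← hAcard i₀]
    haveI := (hAinf i₀).to_subtype
    exact Cardinal.aleph0_le_mk _
  have hTcard : ∀ i, Cardinal.mk (T i) = μi i := by
    intro i
    rw [hT]
    simp only
    rw [Cardinal.mk_image_eq (hGinj i), hAcard i]
  have hTdisj : Pairwise (Function.onFun Disjoint T) := by
    intro i j hij
    rw [Function.onFun, Set.disjoint_left]
    intro z hzi hzj
    have hfin : z.Finite := (hFad i j hij).subset
      (Set.subset_inter (hTsub i z hzi) (hTsub j z hzj))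
    exact hTinf i z hzi hfin
  have hUcard : Cardinal.mk (⋃ i, T i) = μ := by
    rw [Cardinal.mk_iUnion_eq_sum_mk hTdisj]
    rw [← hsum]
    congr 1
    ext i
    exact hTcard i
  have hcard𝒜 : Cardinal.mk 𝒜 = μ := by
    apply le_antisymm
    · refine le_trans (Cardinal.mk_union_le _ _) ?_
      have h1 : Cardinal.mk S ≤ μ := by
        refine le_trans (Cardinal.mk_le_mk_of_subset Set.diff_subset) ?_
        rw [hAcard i₀]
        exact (hlt i₀).le
      calc Cardinal.mk S + Cardinal.mk (⋃ i, T i) ≤ μ + μ := by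
            rw [hUcard]; exact add_le_add h1 le_rfl
        _ = μ := Cardinal.add_eq_self haleph
    · rw [← hUcard]
      exact Cardinal.mk_le_mk_of_subset Set.subset_union_right
  have h𝒜inf : 𝒜.Infinite := by
    rw [← Set.infinite_coe_iff]
    rw [Cardinal.infinite_iff, hcard𝒜]
    exact haleph
  exact ⟨𝒜, ⟨had, hmax⟩, h𝒜inf, hcard𝒜⟩
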